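/- Let x, x' ∈ Σ_q^n with supp(x−x') = {i_1, i_2}, i_1 < i_2. If both x_{[n]∖{i_1}} = x'_{[n]∖{i_2}} and x_{[n]∖{i_2}} = x'_{[n]∖{i_1}}, then i_2 = i_1 + 1, x_{i_1} = x'_{i_2}, x_{i_2} = x'_{i_1}, and x_{i_1} ≠ x_{i_2}; that is, x = w a b w' and x' = w b a w' for some a ≠ b in Σ_q, where w = x_{[1, i_1−1]} = x'_{[1, i_1−1]} and w' = x_{[i_2+1, n]} = x'_{[i_2+1, n]}. -/

import Mathlib

/-- `del x j` is the length-`n` sequence obtained from the length-`(n+1)` sequence `x`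
by deleting its `j`-th coordinate. -/
def del {q n : ℕ} (x : Fin (n + 1) → Fin q) (j : Fin (n + 1)) : Fin n → Fin q :=
  fun i => x (j.succAbove i)

/-- If `supp(x − x') = {i₁, i₂}` with `i₁ < i₂` and both `x_{[n]∖{i₁}} = x'_{[n]∖{i₂}}`
and `x_{[n]∖{i₂}} = x'_{[n]∖{i₁}}`, then `i₂ = i₁ + 1`, `x_{i₁} = x'_{i₂}`,
`x_{i₂} = x'_{i₁}` and `x_{i₁} ≠ x_{i₂}`; i.e. `x = w a b w'` and `x' = w b a w'` with
`a ≠ b` (the common prefix `w` and suffix `w'` agreeing since `x` and `x'` coincide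
outside `{i₁, i₂}`). -/
theorem stmt19 (q n : ℕ) (hq : 2 ≤ q) (x x' : Fin (n + 1) → Fin q)
    (i1 i2 : Fin (n + 1)) (hlt : i1 < i2)
    (hsupp : (Finset.univ.filter fun k => x k ≠ x' k) = {i1, i2})
    (h1 : del x i1 = del x' i2) (h2 : del x i2 = del x' i1) :
    (i2 : ℕ) = (i1 : ℕ) + 1 ∧ x i1 = x' i2 ∧ x i2 = x' i1 ∧ x i1 ≠ x i2 := by
  have hlt' : (i1 : ℕ) < (i2 : ℕ) := hlt
  have hi2n : (i2 : ℕ) < n + 1 := i2.isLt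
  have hi1n : (i1 : ℕ) < n := by omega
  let j : Fin n := ⟨(i1 : ℕ), hi1n⟩
  have hmem : ∀ k : Fin (n + 1), x k ≠ x' k ↔ k = i1 ∨ k = i2 := by
    intro k
    constructor
    · intro h
      have hk : k ∈ Finset.univ.filter fun k => x k ≠ x' k := by simp [h]
      rw [hsupp] at hk
      simpa using hk
    · intro h
      have hk : k ∈ ({i1, i2} : Finset (Fin (n + 1))) := by simpa using h
      rw [← hsupp] at hk
      simpa using hk
  have hne1 : x i1 ≠ x' i1 := (hmem i1).2 (Or.inl rfl)
  have hne2 : x i2 ≠ x' i2 := (hmem i2).2 (Or.inr rfl)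
  have e1 : x (i1.succAbove j) = x' (i2.succAbove j) := congrFun h1 j
  have e2 : x (i2.succAbove j) = x' (i1.succAbove j) := congrFun h2 j
  have hsa1 : i1.succAbove j = ⟨(i1 : ℕ) + 1, by omega⟩ := by
    rw [Fin.succAbove_of_le_castSucc]
    · rfl
    · exact Fin.le_def.mpr (le_refl _)
  have hsa2 : i2.succAbove j = i1 := by
    rw [Fin.succAbove_of_castSucc_lt]
    · ext
      simp only [Fin.coe_castSucc]
      rfl
    · simpa only [Fin.lt_def, Fin.coe_castSucc] using hlt'
  rw [hsa1, hsa2] at e1 e2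
  -- e1 : x ⟨i1+1⟩ = x' i1, e2 : x i1 = x' ⟨i1+1⟩
  by_cases hc : (i2 : ℕ) = (i1 : ℕ) + 1
  · have hi2eq : i2 = ⟨(i1 : ℕ) + 1, by omega⟩ := by ext; simp [hc]
    refine ⟨hc, ?_, ?_, ?_⟩
    · rw [hi2eq]; exact e2
    · rw [hi2eq]; exact e1
    · intro h
      apply hne2
      rw [hi2eq] at *
      rw [← h, e2]
  · exfalso
    set k : Fin (n + 1) := ⟨(i1 : ℕ) + 1, by omega⟩ with hk
    have hkk : x k = x' k := by
      by_contra h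
      rcases (hmem k).1 h with h' | h'
      · have := congrArg Fin.val h'
        simp [hk] at this
      · have := congrArg Fin.val h'
        simp [hk] at this
        omega
    apply hne1
    calc x i1 = x' k := e2
      _ = x k := hkk.symm
      _ = x' i1 := e1
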